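/- For u+s=1 and s > 1/2, the series Σ_{k=0}^∞ a_k with a_k = u(4su)^k binomial(2k,k)/((k+1)4^k) converges to 1/s − 1, so the probability of an infinite tree 1 − Σ_k a_k equals 2 − 1/s > 0. -/

import Mathlib

open Finset

/-- Key lemma: the Catalan generating function at `x ∈ (0,1/4)` with `x = s(1-s)`,
`s > 1/2`, sums to `1/s`. -/
theorem catalanHasSum (u s : ℝ) (hus : u + s = 1) (hs : 1/2 < s) (hs1 : s < 1) :
    HasSum (fun k : ℕ => (catalan k : ℝ) * (s * u) ^ k) (1 / s) := by
  have hu0 : 0 < u := by linarith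
  have hs0 : 0 < s := by linarith
  have hus' : u < s := by linarith
  set x : ℝ := s * u with hx
  have hx0 : 0 < x := mul_pos hs0 hu0
  set f : ℕ → ℝ := fun k => (catalan k : ℝ) * x ^ k with hf
  have hfpos : ∀ k, 0 ≤ f k := by
    intro k
    exact mul_nonneg (Nat.cast_nonneg _) (pow_nonneg hx0.le _)
  -- the Catalan recurrence, cast to ℝ, with powers of x
  have hrec0 : ∀ k : ℕ, ∑ ij ∈ Finset.HasAntidiagonal.antidiagonal k, f ij.1 * f ij.2
      = (catalan (k + 1) : ℝ) * x ^ k := by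
    intro k
    have h1 : (catalan (k + 1) : ℝ) =
        ∑ ij ∈ Finset.HasAntidiagonal.antidiagonal k, (catalan ij.1 : ℝ) * (catalan ij.2 : ℝ) := by
      rw [catalan_succ']
      push_cast
      rfl
    rw [h1, Finset.sum_mul]
    apply Finset.sum_congr rfl
    intro ij hij
    have := Finset.HasAntidiagonal.mem_antidiagonal.mp hij
    simp only [hf]
    rw [← this, pow_add]
    ring
  have hrec : ∀ k : ℕ, f (k + 1) =
      x * ∑ ij ∈ Finset.HasAntidiagonal.antidiagonal k, f ij.1 * f ij.2 := by
    intro k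
    rw [hrec0 k]
    simp only [hf, pow_succ]
    ring
  -- partial sums are bounded by 1/s
  have hbound : ∀ n, ∑ k ∈ Finset.range n, f k ≤ 1 / s := by
    intro n
    induction n with
    | zero => simp; positivity
    | succ n ih =>
      rw [Finset.sum_range_succ']
      have h0 : f 0 = 1 := by simp [hf]
      have key : ∑ k ∈ Finset.range n, f (k + 1) ≤
          x * (∑ k ∈ Finset.range n, f k) ^ 2 := by
        have h1 : ∑ k ∈ Finset.range n, f (k + 1) =
            x * ∑ k ∈ Finset.range n, ∑ ij ∈ Finset.HasAntidiagonal.antidiagonal k, f ij.1 * f ij.2 := by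
          rw [Finset.mul_sum]
          exact Finset.sum_congr rfl fun k _ => hrec k
        rw [h1]
        have h2 : ∑ k ∈ Finset.range n, ∑ ij ∈ Finset.HasAntidiagonal.antidiagonal k, f ij.1 * f ij.2 ≤
            (∑ k ∈ Finset.range n, f k) ^ 2 := by
          have hdisj : ((Finset.range n : Finset ℕ) : Set ℕ).PairwiseDisjoint
              (fun k => (Finset.HasAntidiagonal.antidiagonal k : Finset (ℕ × ℕ))) := by
            intro a _ b _ hab
            simp only [Finset.disjoint_left]
            intro ij hija hijb
            exact hab ((Finset.HasAntidiagonal.mem_antidiagonal.mp hija).symm.trans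
              (Finset.HasAntidiagonal.mem_antidiagonal.mp hijb))
          rw [← Finset.sum_biUnion hdisj]
          have hsub : (Finset.range n).biUnion (fun k => Finset.HasAntidiagonal.antidiagonal k) ⊆
              Finset.range n ×ˢ Finset.range n := by
            intro ij hij
            simp only [Finset.mem_biUnion] at hij
            obtain ⟨k, hk, hijk⟩ := hij
            have hk' := Finset.mem_range.mp hk
            have := Finset.HasAntidiagonal.mem_antidiagonal.mp hijk
            rw [Finset.mem_product, Finset.mem_range, Finset.mem_range]
            omega
          calc ∑ ij ∈ (Finset.range n).biUnion (fun k => Finset.HasAntidiagonal.antidiagonal k),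
                f ij.1 * f ij.2
              ≤ ∑ ij ∈ Finset.range n ×ˢ Finset.range n, f ij.1 * f ij.2 :=
                Finset.sum_le_sum_of_subset_of_nonneg hsub
                  (fun ij _ _ => mul_nonneg (hfpos _) (hfpos _))
            _ = (∑ k ∈ Finset.range n, f k) ^ 2 := by
                rw [sq, Finset.sum_mul_sum, Finset.sum_product]
        exact mul_le_mul_of_nonneg_left h2 hx0.le
      have hsq : x * (∑ k ∈ Finset.range n, f k) ^ 2 ≤ x * (1/s)^2 := by
        apply mul_le_mul_of_nonneg_left _ hx0.le
        apply pow_le_pow_left₀ (Finset.sum_nonneg fun k _ => hfpos k) ih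
      have hux : x * (1/s)^2 = u / s := by
        field_simp [hx]
        ring
      calc (∑ k ∈ Finset.range n, f (k + 1)) + f 0
          ≤ x * (1/s)^2 + 1 := by
            have := key.trans hsq
            rw [h0]; linarith
        _ = u / s + 1 := by rw [hux]
        _ = 1 / s := by field_simp; linarith
  have hsummable : Summable f := summable_of_sum_range_le hfpos hbound
  set L : ℝ := ∑' k, f k with hL
  have hhasSum : HasSum f L := hsummable.hasSum
  have hLle : L ≤ 1 / s := Real.tsum_le_of_sum_range_le hfpos hbound
  -- Cauchy product: L * L = ∑' n, catalan (n+1) * x^n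
  have hnorm : Summable fun k => ‖f k‖ := by
    have : (fun k => ‖f k‖) = f := by
      funext k; exact Real.norm_of_nonneg (hfpos k)
    rw [this]; exact hsummable
  have hcauchy : L * L = ∑' n : ℕ, ((catalan (n + 1) : ℝ) * x ^ n) := by
    rw [hL, tsum_mul_tsum_eq_tsum_sum_antidiagonal_of_summable_norm hnorm hnorm]
    exact tsum_congr fun n => hrec0 n
  -- L = 1 + x * (L * L)
  have hCsummable : Summable (fun n : ℕ => (catalan (n + 1) : ℝ) * x ^ n) := by
    have h := ((summable_nat_add_iff 1).mpr hsummable).mul_left x⁻¹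
    have heq : (fun n : ℕ => x⁻¹ * f (n + 1)) = fun n : ℕ => (catalan (n + 1) : ℝ) * x ^ n := by
      funext n
      rw [hrec n, hrec0 n]
      field_simp
    rwa [heq] at h
  have hquad : L = 1 + x * (L * L) := by
    rw [hcauchy, ← tsum_mul_left]
    have : (fun n : ℕ => x * ((catalan (n + 1) : ℝ) * x ^ n)) = fun n => f (n + 1) := by
      funext n
      rw [hrec n, hrec0 n]
    rw [this, hL, Summable.tsum_eq_zero_add hsummable]
    have h0 : f 0 = 1 := by simp [hf]
    rw [h0]
  -- solve the quadratic
  have hfac : (x * L - u) * (x * L - s) = 0 := by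
    have : (x * L - u) * (x * L - s) = x * (x * (L * L) + 1 - L) := by
      simp only [hx]
      linear_combination (-(s * u * L)) * hus
    rw [this]
    linear_combination (-x) * hquad
  have hne : x * L - s ≠ 0 := by
    have : x * L ≤ u := by
      calc x * L ≤ x * (1 / s) := mul_le_mul_of_nonneg_left hLle hx0.le
        _ = u := by field_simp [hx]; exact hx
    intro h
    have : x * L = s := by linarith [sub_eq_zero.mp h]
    linarith
  have hxL : x * L = u := by
    rcases mul_eq_zero.mp hfac with h | h
    · linarith [sub_eq_zero.mp h]
    · exact absurd h hne
  have hLval : L = 1 / s := by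
    have h : u * (s * L - 1) = 0 := by
      rw [hx] at hxL
      linear_combination hxL
    rcases mul_eq_zero.mp h with h | h
    · exact absurd h (ne_of_gt hu0)
    · rw [eq_div_iff (ne_of_gt hs0)]
      linear_combination h
  rw [← hLval]
  exact hhasSum

/-- For u+s=1, 1/2 < s < 1, the series Σ_k u(4su)^k binomial(2k,k)/((k+1)4^k)
converges to 1/s − 1, so the probability of an infinite tree is 2 − 1/s > 0. -/
theorem stmt3 (u s : ℝ) (hus : u + s = 1) (hs : 1/2 < s) (hs1 : s < 1) :
    HasSum (fun k : ℕ =>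
      u * (4 * s * u)^k * (Nat.choose (2 * k) k : ℝ) / ((k + 1) * 4^k)) (1/s - 1)
    ∧ 1 - (1/s - 1) = 2 - 1/s ∧ 0 < 2 - 1/s := by
  have hu0 : 0 < u := by linarith
  have hs0 : 0 < s := by linarith
  refine ⟨?_, by ring, ?_⟩
  · have h := (catalanHasSum u s hus hs hs1).mul_left u
    have heq : (fun k : ℕ => u * ((catalan k : ℝ) * (s * u) ^ k)) =
        fun k : ℕ => u * (4 * s * u)^k * (Nat.choose (2 * k) k : ℝ) / ((k + 1) * 4^k) := by
      funext k
      have hcb : ((2 * k).choose k : ℝ) = ((k : ℝ) + 1) * (catalan k : ℝ) := by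
        have h1 : (k + 1) * catalan k = Nat.centralBinom k := succ_mul_catalan_eq_centralBinom k
        have h2 : Nat.centralBinom k = (2 * k).choose k := rfl
        rw [h2] at h1
        exact_mod_cast h1.symm
      have h4 : ((4 : ℝ) * s * u) ^ k = 4 ^ k * (s * u) ^ k := by
        rw [← mul_pow]; ring_nf
      have hk1 : ((k : ℝ) + 1) ≠ 0 := by positivity
      have h4k : ((4 : ℝ)) ^ k ≠ 0 := by positivity
      rw [hcb, h4]
      field_simp
    rw [heq] at h
    have hval : u * (1 / s) = 1 / s - 1 := by
      field_simp
      linarith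
    rwa [hval] at h
  · have : 1 / s < 2 := by
      rw [div_lt_iff₀ hs0]
      linarith
    linarith
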